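/- Let R be a finite-dimensional associative unital algebra over an infinite field F with basis a_1,…,a_m, and let x = Σ x_i a_i be the generic element over K = F(x_1,…,x_m). Then the minimal polynomial P(t) of x over K has coefficients in the polynomial ring A = F[x_1,…,x_m]. -/

import Mathlib

open TensorProduct

variable {F R ι : Type*}

/-- The polynomial function on `R` attached to a polynomial in the coordinates
along the basis `b`. -/
noncomputable def polyFun [Field F] [Ring R] [Algebra F R] [Fintype ι]
    (b : Module.Basis ι F R) (p : MvPolynomial ι F) : R → F :=
  fun r => MvPolynomial.eval (fun i => b.repr r i) p

/-- The abstract characteristic polynomial `χ_a(t) = N(t·1 - a)` of an element `a`,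
for the polynomial map attached to `p`. -/
noncomputable def charPolyOf [Field F] [Ring R] [Algebra F R] [Fintype ι]
    (b : Module.Basis ι F R) (p : MvPolynomial ι F) (a : R) : Polynomial F :=
  MvPolynomial.aeval
    (fun i => Polynomial.C (b.repr 1 i) * Polynomial.X - Polynomial.C (b.repr a i)) p

/-- `p` defines a Cayley–Hamilton norm of degree `n` on `R` (w.r.t. the basis `b`):
homogeneous of degree `n`, multiplicative, and every element satisfies its abstract
characteristic polynomial. -/
structure IsCHNorm [Field F] [Ring R] [Algebra F R] [Fintype ι]
    (b : Module.Basis ι F R) (n : ℕ) (p : MvPolynomial ι F) : Prop where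
  homog : ∀ (α : F) (r : R), polyFun b p (α • r) = α ^ n * polyFun b p r
  mult : ∀ x y : R, polyFun b p (x * y) = polyFun b p x * polyFun b p y
  ch : ∀ a : R, Polynomial.aeval a (charPolyOf b p a) = 0

/-- The generic element `x = Σ xᵢ aᵢ` of `R ⊗ K`, `K` the rational function field. -/
noncomputable def genElt [Field F] [Ring R] [Algebra F R] [Fintype ι] (b : Module.Basis ι F R) :
    FractionRing (MvPolynomial ι F) ⊗[F] R :=
  ∑ i, algebraMap (MvPolynomial ι F) (FractionRing (MvPolynomial ι F)) (MvPolynomial.X i)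
    ⊗ₜ[F] b i

set_option maxHeartbeats 2000000 in
set_option synthInstance.maxHeartbeats 1000000 in
/-- The minimal polynomial of the generic element of a finite-dimensional associative
unital algebra has coefficients in the polynomial ring `F[x₁,…,x_m]`. -/
theorem stmt3 [Field F] [Infinite F] [Ring R] [Algebra F R] [FiniteDimensional F R]
    [Fintype ι] (b : Module.Basis ι F R) (j : ℕ) :
    (minpoly (FractionRing (MvPolynomial ι F)) (genElt b)).coeff j ∈
      (algebraMap (MvPolynomial ι F) (FractionRing (MvPolynomial ι F))).range := by
  classical
  set K := FractionRing (MvPolynomial ι F) with hK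
  set g : ι → K ⊗[F] R := fun i => (1 : K) ⊗ₜ[F] b i with hg
  set M := Submodule.span (MvPolynomial ι F) (Set.range g) with hM
  have hmem : ∀ r : R, (1 : K) ⊗ₜ[F] r ∈ M := by
    intro r
    have hr : (1 : K) ⊗ₜ[F] r = ∑ i, (MvPolynomial.C (b.repr r i) : MvPolynomial ι F) • g i := by
      calc (1 : K) ⊗ₜ[F] r = (1 : K) ⊗ₜ[F] (∑ i, b.repr r i • b i) := by rw [b.sum_repr]
        _ = ∑ i, (b.repr r i) • ((1 : K) ⊗ₜ[F] b i) := by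
            rw [TensorProduct.tmul_sum]
            exact Finset.sum_congr rfl fun i _ => (TensorProduct.tmul_smul _ _ _)
        _ = ∑ i, (MvPolynomial.C (b.repr r i) : MvPolynomial ι F) • g i := by
            refine Finset.sum_congr rfl fun i _ => ?_
            rw [hg, ← MvPolynomial.algebraMap_eq, algebraMap_smul]
    rw [hr]
    exact Submodule.sum_mem _ fun i _ => Submodule.smul_mem _ _ (Submodule.subset_span ⟨i, rfl⟩)
  have hone : (1 : K ⊗[F] R) ∈ M := by
    have h1 : (1 : K ⊗[F] R) = (1 : K) ⊗ₜ[F] (1 : R) := rfl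
    rw [h1]; exact hmem 1
  have hmulg : ∀ (i : ι), ∀ x ∈ M, x * g i ∈ M := by
    intro i x hx
    induction hx using Submodule.span_induction with
    | mem z hz =>
        obtain ⟨i', rfl⟩ := hz
        have hz : g i' * g i = (1 : K) ⊗ₜ[F] (b i' * b i) := by
          rw [hg]
          simp [Algebra.TensorProduct.tmul_mul_tmul]
        exact hz ▸ hmem _
    | zero => rw [zero_mul]; exact M.zero_mem
    | add u v hu hv hpu hpv => rw [add_mul]; exact M.add_mem hpu hpv
    | smul a u hu hpu =>
        rw [smul_mul_assoc]
        exact M.smul_mem _ hpu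
  have hmul : ∀ x y : K ⊗[F] R, x ∈ M → y ∈ M → x * y ∈ M := by
    intro x y hx hy
    induction hy using Submodule.span_induction with
    | mem z hz => obtain ⟨i, rfl⟩ := hz; exact hmulg i x hx
    | zero => rw [mul_zero]; exact M.zero_mem
    | add u v hu hv hpu hpv => rw [mul_add]; exact M.add_mem hpu hpv
    | smul a u hu hpu =>
        rw [mul_smul_comm]
        exact M.smul_mem _ hpu
  have hxmem : genElt b ∈ M := by
    have hgen : genElt b = ∑ i, algebraMap (MvPolynomial ι F) K (MvPolynomial.X i) ⊗ₜ[F] b i :=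
      rfl
    rw [hgen]
    refine Submodule.sum_mem _ fun i _ => ?_
    have hsm : (MvPolynomial.X i : MvPolynomial ι F) • g i
        = algebraMap (MvPolynomial ι F) K (MvPolynomial.X i) ⊗ₜ[F] b i := by
      rw [hg, ← algebraMap_smul K (MvPolynomial.X i : MvPolynomial ι F)
        ((1 : K) ⊗ₜ[F] b i : K ⊗[F] R), TensorProduct.smul_tmul', smul_eq_mul, mul_one]
    rw [← hsm]
    exact Submodule.smul_mem _ _ (Submodule.subset_span ⟨i, rfl⟩)
  have hint : IsIntegral (MvPolynomial ι F) (genElt b) := by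
    refine IsIntegral.of_mem_of_fg (M.toSubalgebra hone hmul) ?_ _ (Submodule.mem_toSubalgebra.mpr hxmem)
    rw [Submodule.toSubalgebra_toSubmodule]
    exact Submodule.fg_span (Set.finite_range g)
  obtain ⟨f, hfmonic, hf0⟩ := hint
  have hdvd : minpoly K (genElt b) ∣ f.map (algebraMap (MvPolynomial ι F) K) := by
    refine minpoly.dvd _ _ ?_
    rw [Polynomial.aeval_map_algebraMap, Polynomial.aeval_def]
    exact hf0
  obtain ⟨q, hq⟩ := IsIntegrallyClosed.eq_map_mul_C_of_dvd K hfmonic hdvd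
  have hmonic : (minpoly K (genElt b)).Monic :=
    minpoly.monic (IsIntegral.tower_top (A := K) ⟨f, hfmonic, hf0⟩)
  rw [hmonic.leadingCoeff, Polynomial.C_1, mul_one] at hq
  rw [← hq, Polynomial.coeff_map]
  exact ⟨q.coeff j, rfl⟩
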